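/- arXiv:1903.09892 — 6 statements merged into one kernel-verified Lean document; each statement's English description precedes it below -/
import Mathlib

section
/- For integers k, l with 0 ≤ l ≤ k and l ≠ -1, k ≠ l-1, the vector field Θ^l_k equals ∇(x^{l+1}) × ∇( -(y^2+z^2)^{k-l+1} / (2(l+1)(k-l+1)) ). -/
noncomputable def px (f : ℝ → ℝ → ℝ → ℝ) (x y z : ℝ) : ℝ := deriv (fun t => f t y z) x
noncomputable def py (f : ℝ → ℝ → ℝ → ℝ) (x y z : ℝ) : ℝ := deriv (fun t => f x t z) y
noncomputable def pz (f : ℝ → ℝ → ℝ → ℝ) (x y z : ℝ) : ℝ := deriv (fun t => f x y t) z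

/-- Gradient of a scalar function on `ℝ³`. -/
noncomputable def grad (f : ℝ → ℝ → ℝ → ℝ) (x y z : ℝ) : ℝ × ℝ × ℝ :=
  (px f x y z, py f x y z, pz f x y z)

/-- Cross product in `ℝ³`. -/
def cross (a b : ℝ × ℝ × ℝ) : ℝ × ℝ × ℝ :=
  (a.2.1 * b.2.2 - a.2.2 * b.2.1, a.2.2 * b.1 - a.1 * b.2.2, a.1 * b.2.1 - a.2.1 * b.1)

/-- Curl of a vector field on `ℝ³` given by its three components. -/
noncomputable def curl (v1 v2 v3 : ℝ → ℝ → ℝ → ℝ) (x y z : ℝ) : ℝ × ℝ × ℝ :=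
  (py v3 x y z - pz v2 x y z, pz v1 x y z - px v3 x y z, px v2 x y z - py v1 x y z)

/-- Components of `F^l_k = x^l (y²+z²)^{k-l} ((k-l+1)x ∂x - ((l+1)/2) y ∂y - ((l+1)/2) z ∂z)`. -/
noncomputable def F1 (l k : ℤ) (x y z : ℝ) : ℝ :=
  ((k : ℝ) - (l : ℝ) + 1) * x ^ (l + 1).toNat * (y ^ 2 + z ^ 2) ^ (k - l).toNat
noncomputable def F2 (l k : ℤ) (x y z : ℝ) : ℝ :=
  -(((l : ℝ) + 1) / 2) * x ^ l.toNat * y * (y ^ 2 + z ^ 2) ^ (k - l).toNat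
noncomputable def F3 (l k : ℤ) (x y z : ℝ) : ℝ :=
  -(((l : ℝ) + 1) / 2) * x ^ l.toNat * z * (y ^ 2 + z ^ 2) ^ (k - l).toNat

/-- Components of `Θ^l_k = x^l (y²+z²)^{k-l} (z ∂y - y ∂z)`. -/
noncomputable def T1 (_l _k : ℤ) (_x _y _z : ℝ) : ℝ := 0
noncomputable def T2 (l k : ℤ) (x y z : ℝ) : ℝ :=
  x ^ l.toNat * (y ^ 2 + z ^ 2) ^ (k - l).toNat * z
noncomputable def T3 (l k : ℤ) (x y z : ℝ) : ℝ :=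
  -(x ^ l.toNat * (y ^ 2 + z ^ 2) ^ (k - l).toNat * y)

/-- Euler's form for `Θ^l_k`:
`Θ^l_k = ∇(x^{l+1}) × ∇( -(y²+z²)^{k-l+1} / (2(l+1)(k-l+1)) )`. -/
theorem Theta_eulerForm (k l : ℤ) (hl : 0 ≤ l) (hlk : l ≤ k)
    (hl' : l ≠ -1) (hk' : k ≠ l - 1) :
    ∀ x y z : ℝ,
      (T1 l k x y z, T2 l k x y z, T3 l k x y z) =
        cross (grad (fun x _ _ => x ^ (l + 1).toNat) x y z)
          (grad (fun _ y z =>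
            -(y ^ 2 + z ^ 2) ^ (k - l + 1).toNat /
              (2 * ((l : ℝ) + 1) * ((k : ℝ) - (l : ℝ) + 1))) x y z) := by

  intro x y z
  set c : ℝ := 2 * ((l : ℝ) + 1) * ((k : ℝ) - (l : ℝ) + 1) with hc
  have hn : (l + 1).toNat = l.toNat + 1 := by omega
  have hm : (k - l + 1).toNat = (k - l).toNat + 1 := by omega
  have e1 : ((l.toNat : ℝ)) = (l : ℝ) := by exact_mod_cast Int.toNat_of_nonneg hl
  have e2 : (((k - l).toNat : ℝ)) = (k : ℝ) - (l : ℝ) := by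
    exact_mod_cast Int.toNat_of_nonneg (by omega : (0:ℤ) ≤ k - l)
  have hcl : ((l : ℝ) + 1) ≠ 0 := by
    have : (0:ℝ) ≤ (l : ℝ) := by exact_mod_cast hl
    linarith
  have hck : ((k : ℝ) - (l : ℝ) + 1) ≠ 0 := by
    have : (l : ℝ) ≤ (k : ℝ) := by exact_mod_cast hlk
    linarith
  have dy : HasDerivAt (fun t : ℝ => -(t ^ 2 + z ^ 2) ^ (k - l + 1).toNat / c)
      (-(((k - l + 1).toNat : ℝ) * (y ^ 2 + z ^ 2) ^ ((k - l + 1).toNat - 1) * (2 * y)) / c) y := by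
    have h1 : HasDerivAt (fun t : ℝ => t ^ 2 + z ^ 2) (2 * y) y := by
      simpa using (hasDerivAt_pow 2 y).add_const (z ^ 2)
    exact (((h1.pow _).neg).div_const c)
  have dz : HasDerivAt (fun t : ℝ => -(y ^ 2 + t ^ 2) ^ (k - l + 1).toNat / c)
      (-(((k - l + 1).toNat : ℝ) * (y ^ 2 + z ^ 2) ^ ((k - l + 1).toNat - 1) * (2 * z)) / c) z := by
    have h1 : HasDerivAt (fun t : ℝ => y ^ 2 + t ^ 2) (2 * z) z := by
      simpa using ((hasDerivAt_pow 2 z).const_add (y ^ 2))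
    exact (((h1.pow _).neg).div_const c)
  simp only [T1, T2, T3, cross, grad, px, py, pz, deriv_pow_field, deriv_const, dy.deriv, dz.deriv]
  rw [hm, hn]
  simp only [Nat.add_sub_cancel, Prod.mk.injEq]
  push_cast [e1, e2]
  refine ⟨by ring, ?_, ?_⟩ <;> · rw [hc]; field_simp; ring
end

section
/- For integers k, l with 0 ≤ l ≤ k, the vector field F^l_k equals the curl of the vector field A = (1/2) x^{l+1} (y^2+z^2)^{k-l} ( -z e_y + y e_z ); that is, F^l_k = ∇ × A. -/
/-- `F^l_k = ∇ × A` with `A = (1/2) x^{l+1} (y²+z²)^{k-l} (-z e_y + y e_z)`. -/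
theorem F_vectorPotential (k l : ℤ) (hl : 0 ≤ l) (hlk : l ≤ k) :
    ∀ x y z : ℝ,
      (F1 l k x y z, F2 l k x y z, F3 l k x y z) =
        curl (fun _ _ _ => 0)
          (fun x y z =>
            (1 / 2) * x ^ (l + 1).toNat * (y ^ 2 + z ^ 2) ^ (k - l).toNat * (-z))
          (fun x y z =>
            (1 / 2) * x ^ (l + 1).toNat * (y ^ 2 + z ^ 2) ^ (k - l).toNat * y)
          x y z := by
  intro x y z
  have hlt : ((l.toNat : ℕ) : ℝ) = (l : ℝ) := by exact_mod_cast Int.toNat_of_nonneg hl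
  have hNn : (l + 1).toNat = l.toNat + 1 := by omega
  have hy : HasDerivAt (fun t : ℝ =>
      (1 / 2) * x ^ (l + 1).toNat * (t ^ 2 + z ^ 2) ^ (k - l).toNat * t)
      (((1 / 2) * x ^ (l + 1).toNat * (((k - l).toNat : ℝ) *
          (y ^ 2 + z ^ 2) ^ ((k - l).toNat - 1) * (2 * y ^ 1))) * y
        + ((1 / 2) * x ^ (l + 1).toNat * (y ^ 2 + z ^ 2) ^ (k - l).toNat) * 1) y :=
    ((((hasDerivAt_pow 2 y).add_const (z ^ 2)).pow _).const_mul
      ((1 / 2) * x ^ (l + 1).toNat)).mul (hasDerivAt_id' y)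
  have hz : HasDerivAt (fun t : ℝ =>
      (1 / 2) * x ^ (l + 1).toNat * (y ^ 2 + t ^ 2) ^ (k - l).toNat * (-t))
      (((1 / 2) * x ^ (l + 1).toNat * (((k - l).toNat : ℝ) *
          (y ^ 2 + z ^ 2) ^ ((k - l).toNat - 1) * (2 * z ^ 1))) * (-z)
        + ((1 / 2) * x ^ (l + 1).toNat * (y ^ 2 + z ^ 2) ^ (k - l).toNat) * (-1)) z :=
    ((((hasDerivAt_pow 2 z).const_add (y ^ 2)).pow _).const_mul
      ((1 / 2) * x ^ (l + 1).toNat)).mul (hasDerivAt_id' z).neg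
  have hx2 : HasDerivAt (fun t : ℝ =>
      (1 / 2) * t ^ (l + 1).toNat * (y ^ 2 + z ^ 2) ^ (k - l).toNat * (-z))
      ((1 / 2) * (((l + 1).toNat : ℝ) * x ^ ((l + 1).toNat - 1)) *
        (y ^ 2 + z ^ 2) ^ (k - l).toNat * (-z)) x :=
    (((hasDerivAt_pow _ x).const_mul (1 / 2)).mul_const
      ((y ^ 2 + z ^ 2) ^ (k - l).toNat)).mul_const (-z)
  have hx3 : HasDerivAt (fun t : ℝ =>
      (1 / 2) * t ^ (l + 1).toNat * (y ^ 2 + z ^ 2) ^ (k - l).toNat * y)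
      ((1 / 2) * (((l + 1).toNat : ℝ) * x ^ ((l + 1).toNat - 1)) *
        (y ^ 2 + z ^ 2) ^ (k - l).toNat * y) x :=
    (((hasDerivAt_pow _ x).const_mul (1 / 2)).mul_const
      ((y ^ 2 + z ^ 2) ^ (k - l).toNat)).mul_const y
  simp only [curl, px, py, pz, F1, F2, F3, Prod.mk.injEq]
  rw [hy.deriv, hz.deriv, hx2.deriv, hx3.deriv]
  refine ⟨?_, ?_, ?_⟩
  · generalize hm : (k - l).toNat = m
    have hmR : (m : ℝ) = (k : ℝ) - (l : ℝ) := by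
      have : (m : ℤ) = k - l := by omega
      exact_mod_cast congrArg (fun n : ℤ => (n : ℝ)) this
    cases m with
    | zero =>
      have hk0 : (k : ℝ) - (l : ℝ) = 0 := by rw [← hmR]; norm_num
      rw [hk0]; push_cast; ring
    | succ j =>
      rw [← hmR, Nat.succ_sub_one]; push_cast; ring
  · simp only [deriv_const]
    rw [hNn, Nat.add_sub_cancel]; push_cast [hlt]; ring
  · simp only [deriv_const]
    rw [hNn, Nat.add_sub_cancel]; push_cast [hlt]; ring
end

section
/- For integers k, l with 0 ≤ l ≤ k, the curl of B^l_k := (x^l/(2(k-l+1))) ( (y^2+z^2)^{k-l+1} - y^{2(k-l+1)} ) e_x - ( x^{l+1} y^{2(k-l)+1} / (l+1) ) e_y equals Θ^l_k = x^l (y^2+z^2)^{k-l} ( z e_y ∂/∂y-direction minus y in the ∂/∂z-direction ), i.e., Θ^l_k = ∇ × B^l_k. -/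
/-- `Θ^l_k = ∇ × B^l_k` where
`B^l_k = (x^l/(2(k-l+1)))((y²+z²)^{k-l+1} - y^{2(k-l+1)}) e_x - (x^{l+1} y^{2(k-l)+1}/(l+1)) e_y`. -/
theorem Theta_vectorPotential' (k l : ℤ) (hl : 0 ≤ l) (hlk : l ≤ k) :
    ∀ x y z : ℝ,
      (T1 l k x y z, T2 l k x y z, T3 l k x y z) =
        curl (fun x y z =>
            x ^ l.toNat / (2 * ((k : ℝ) - (l : ℝ) + 1)) *
              ((y ^ 2 + z ^ 2) ^ (k - l + 1).toNat - y ^ (2 * (k - l + 1).toNat)))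
          (fun x y _ =>
            -(x ^ (l + 1).toNat * y ^ (2 * (k - l).toNat + 1)) / ((l : ℝ) + 1))
          (fun _ _ _ => 0) x y z := by
  intro x y z
  set m := (k - l).toNat with hmdef
  have hm : (k - l + 1).toNat = m + 1 := by omega
  have hmr : ((m : ℝ) + 1) = (k : ℝ) - l + 1 := by
    have : ((m : ℤ) : ℝ) = ((k - l : ℤ) : ℝ) := by
      rw [hmdef, Int.toNat_of_nonneg (by omega)]
    push_cast at this ⊢
    linarith
  have hl1 : (l + 1).toNat = l.toNat + 1 := by omega
  have hlr : ((l.toNat : ℝ) + 1) = (l : ℝ) + 1 := by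
    have : ((l.toNat : ℤ) : ℝ) = ((l : ℤ) : ℝ) := by rw [Int.toNat_of_nonneg hl]
    push_cast at this ⊢
    linarith
  have hkl0 : (2 : ℝ) * ((k : ℝ) - l + 1) ≠ 0 := by
    have : (l : ℝ) ≤ (k : ℝ) := by exact_mod_cast hlk
    nlinarith
  have hl0 : ((l : ℝ) + 1) ≠ 0 := by
    have : (0 : ℝ) ≤ (l : ℝ) := by exact_mod_cast hl
    positivity
  have d1 : deriv (fun t : ℝ =>
      x ^ l.toNat / (2 * ((k : ℝ) - l + 1)) *
        ((y ^ 2 + t ^ 2) ^ (k - l + 1).toNat - y ^ (2 * (k - l + 1).toNat))) z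
      = x ^ l.toNat * (y ^ 2 + z ^ 2) ^ m * z := by
    rw [hm]
    have h : HasDerivAt (fun t : ℝ => (y ^ 2 + t ^ 2) ^ (m + 1))
        (((m : ℝ) + 1) * (y ^ 2 + z ^ 2) ^ m * (2 * z)) z := by
      have := ((hasDerivAt_pow 2 z).const_add (y ^ 2)).fun_pow (m + 1)
      simpa [mul_comm, mul_assoc, mul_left_comm] using this
    have h2 := ((h.sub_const (y ^ (2 * (m + 1)))).const_mul (x ^ l.toNat / (2 * ((k : ℝ) - l + 1))))
    rw [h2.deriv]
    rw [hmr]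
    have hA : ((k : ℝ) - l + 1) ≠ 0 := fun h => hkl0 (by rw [h]; ring)
    field_simp
  have d2 : deriv (fun t : ℝ =>
      x ^ l.toNat / (2 * ((k : ℝ) - l + 1)) *
        ((t ^ 2 + z ^ 2) ^ (k - l + 1).toNat - t ^ (2 * (k - l + 1).toNat))) y
      = x ^ l.toNat * ((y ^ 2 + z ^ 2) ^ m * y - y ^ (2 * m + 1)) := by
    rw [hm]
    have h : HasDerivAt (fun t : ℝ => (t ^ 2 + z ^ 2) ^ (m + 1))
        (((m : ℝ) + 1) * (y ^ 2 + z ^ 2) ^ m * (2 * y)) y := by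
      have := ((hasDerivAt_pow 2 y).add_const (z ^ 2)).fun_pow (m + 1)
      simpa [mul_comm, mul_assoc, mul_left_comm] using this
    have hp : HasDerivAt (fun t : ℝ => t ^ (2 * (m + 1)))
        ((2 * ((m : ℝ) + 1)) * y ^ (2 * m + 1)) y := by
      have := hasDerivAt_pow (2 * (m + 1)) y
      have he : 2 * (m + 1) - 1 = 2 * m + 1 := by omega
      rw [he] at this
      convert this using 1
      · rfl
      push_cast
      ring
    have h2 := ((h.fun_sub hp).const_mul (x ^ l.toNat / (2 * ((k : ℝ) - l + 1))))
    rw [h2.deriv]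
    rw [hmr]
    have hA : ((k : ℝ) - l + 1) ≠ 0 := fun h => hkl0 (by rw [h]; ring)
    field_simp
  have d3 : deriv (fun t : ℝ =>
      -(t ^ (l + 1).toNat * y ^ (2 * m + 1)) / ((l : ℝ) + 1)) x
      = -(x ^ l.toNat * y ^ (2 * m + 1)) := by
    rw [hl1]
    have h : HasDerivAt (fun t : ℝ => -(t ^ (l.toNat + 1) * y ^ (2 * m + 1)) / ((l : ℝ) + 1))
        (-(((l.toNat : ℝ) + 1) * x ^ l.toNat * y ^ (2 * m + 1)) / ((l : ℝ) + 1)) x := by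
      have := (((hasDerivAt_pow (l.toNat + 1) x).mul_const (y ^ (2 * m + 1))).neg).div_const
        ((l : ℝ) + 1)
      simpa [mul_comm, mul_assoc, mul_left_comm] using this
    rw [h.deriv, hlr]
    field_simp
  simp only [curl, px, py, pz, T1, T2, T3]
  rw [d1, d2, d3]
  simp only [deriv_const']
  simp only [Prod.mk.injEq]
  refine ⟨by ring, by ring, by ring⟩
end

section
/- For integers k, l with 1 ≤ l ≤ k, the vector field F^l_k admits the Clebsch representation F^l_k = f_1 ∇f_2 + ∇f_3, where f_1 = x^l, f_2 = -((l+1)/(4(k-l+1))) (y^2+z^2)^{k-l+1} - ((k-l+1)/l) x^2 (y^2+z^2)^{k-l}, and f_3 = ((k-l+1)/l) (y^2+z^2)^{k-l} x^{l+2}. -/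
lemma hasDerivAt_qL (n : ℕ) (y c : ℝ) :
    HasDerivAt (fun t : ℝ => (t ^ 2 + c) ^ n)
      (↑n * (y ^ 2 + c) ^ (n - 1) * (2 * y)) y := by
  simpa using ((hasDerivAt_pow 2 y).add_const c).fun_pow n

lemma hasDerivAt_qR (n : ℕ) (z c : ℝ) :
    HasDerivAt (fun t : ℝ => (c + t ^ 2) ^ n)
      (↑n * (c + z ^ 2) ^ (n - 1) * (2 * z)) z := by
  simpa using ((hasDerivAt_pow 2 z).const_add c).fun_pow n

/-- Clebsch representation `F^l_k = f₁ ∇f₂ + ∇f₃` with `f₁ = x^l`,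
`f₂ = -((l+1)/(4(k-l+1)))(y²+z²)^{k-l+1} - ((k-l+1)/l) x² (y²+z²)^{k-l}`,
`f₃ = ((k-l+1)/l)(y²+z²)^{k-l} x^{l+2}`. -/
theorem F_clebsch (k l : ℤ) (hl : 1 ≤ l) (hlk : l ≤ k) :
    ∀ x y z : ℝ,
      (F1 l k x y z, F2 l k x y z, F3 l k x y z) =
        (x ^ l.toNat) •
            grad (fun x y z =>
              -(((l : ℝ) + 1) / (4 * ((k : ℝ) - (l : ℝ) + 1))) *
                  (y ^ 2 + z ^ 2) ^ (k - l + 1).toNat -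
                (((k : ℝ) - (l : ℝ) + 1) / (l : ℝ)) * x ^ 2 *
                  (y ^ 2 + z ^ 2) ^ (k - l).toNat) x y z +
          grad (fun x y z =>
            (((k : ℝ) - (l : ℝ) + 1) / (l : ℝ)) * (y ^ 2 + z ^ 2) ^ (k - l).toNat *
              x ^ (l + 2).toNat) x y z := by
  intro x y z
  obtain ⟨L, rfl⟩ : ∃ L : ℕ, l = (L : ℤ) := ⟨l.toNat, (Int.toNat_of_nonneg (by omega)).symm⟩
  obtain ⟨m, hm⟩ : ∃ m : ℕ, k = (L : ℤ) + m := ⟨(k - L).toNat, by omega⟩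
  subst hm
  have hL1 : 1 ≤ L := by exact_mod_cast hl
  have e1 : ((L:ℤ) + 1).toNat = L + 1 := by omega
  have e2 : ((L:ℤ) + 2).toNat = L + 2 := by omega
  have e3 : ((L:ℤ) + (m:ℤ) - L).toNat = m := by omega
  have e4 : ((L:ℤ) + (m:ℤ) - L + 1).toNat = m + 1 := by omega
  have e5 : ((L:ℤ)).toNat = L := by omega
  have c1 : ((((L:ℤ) + (m:ℤ)) : ℤ) : ℝ) - ((L:ℤ) : ℝ) + 1 = (m:ℝ) + 1 := by
    push_cast; ring
  have c2 : ((((L:ℤ) + (m:ℤ)) : ℤ) : ℝ) - (L : ℝ) + 1 = (m:ℝ) + 1 := by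
    push_cast; ring
  have c3 : (((L:ℤ)) : ℝ) = (L:ℝ) := by push_cast; ring
  simp only [F1, F2, F3, grad, px, py, pz, e1, e2, e3, e4, e5, c1, c2, c3,
    Prod.smul_mk, Prod.mk_add_mk, smul_eq_mul, Prod.mk.injEq]
  have hLne : (L:ℝ) ≠ 0 := by positivity
  have hmne : (m:ℝ) + 1 ≠ 0 := by positivity
  refine ⟨?_, ?_, ?_⟩
  · have h1 : HasDerivAt
        (fun t : ℝ => -((↑L + 1) / (4 * (↑m + 1))) * (y ^ 2 + z ^ 2) ^ (m + 1) -
          (↑m + 1) / ↑L * t ^ 2 * (y ^ 2 + z ^ 2) ^ m)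
        (-(((m:ℝ) + 1) / ↑L * (((2:ℕ):ℝ) * x ^ (2 - 1)) * (y ^ 2 + z ^ 2) ^ m)) x := by
      exact ((((hasDerivAt_pow 2 x).const_mul (((m:ℝ) + 1) / ↑L)).mul_const
        ((y ^ 2 + z ^ 2) ^ m)).const_sub
        (-((↑L + 1) / (4 * ((m:ℝ) + 1))) * (y ^ 2 + z ^ 2) ^ (m + 1)))
    have h2 : HasDerivAt
        (fun t : ℝ => (↑m + 1) / ↑L * (y ^ 2 + z ^ 2) ^ m * t ^ (L + 2))
        (((m:ℝ) + 1) / ↑L * (y ^ 2 + z ^ 2) ^ m * ((((L + 2 : ℕ)):ℝ) * x ^ (L + 2 - 1))) x := by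
      exact (hasDerivAt_pow (L + 2) x).const_mul
        (((m:ℝ) + 1) / ↑L * (y ^ 2 + z ^ 2) ^ m)
    rw [h1.deriv, h2.deriv]
    simp only [Nat.add_sub_cancel, Nat.cast_add, Nat.cast_ofNat, Nat.cast_one, pow_one]
    norm_num
    field_simp
    ring
  · have h1 : HasDerivAt
        (fun t : ℝ => -((↑L + 1) / (4 * (↑m + 1))) * (t ^ 2 + z ^ 2) ^ (m + 1) -
          (↑m + 1) / ↑L * x ^ 2 * (t ^ 2 + z ^ 2) ^ m)
        (-((↑L + 1) / (4 * ((m:ℝ) + 1))) * (↑(m + 1) * (y ^ 2 + z ^ 2) ^ (m + 1 - 1) * (2 * y)) -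
          ((m:ℝ) + 1) / ↑L * x ^ 2 * (↑m * (y ^ 2 + z ^ 2) ^ (m - 1) * (2 * y))) y := by
      exact ((hasDerivAt_qL (m + 1) y (z ^ 2)).const_mul
        (-((↑L + 1) / (4 * ((m:ℝ) + 1))))).sub
        ((hasDerivAt_qL m y (z ^ 2)).const_mul (((m:ℝ) + 1) / ↑L * x ^ 2))
    have h2 : HasDerivAt
        (fun t : ℝ => (↑m + 1) / ↑L * (t ^ 2 + z ^ 2) ^ m * x ^ (L + 2))
        (((m:ℝ) + 1) / ↑L * (↑m * (y ^ 2 + z ^ 2) ^ (m - 1) * (2 * y)) * x ^ (L + 2)) y := by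
      exact ((hasDerivAt_qL m y (z ^ 2)).const_mul (((m:ℝ) + 1) / ↑L)).mul_const (x ^ (L + 2))
    rw [h1.deriv, h2.deriv]
    simp only [Nat.add_sub_cancel, Nat.cast_add, Nat.cast_one]
    field_simp
    ring
  · have h1 : HasDerivAt
        (fun t : ℝ => -((↑L + 1) / (4 * (↑m + 1))) * (y ^ 2 + t ^ 2) ^ (m + 1) -
          (↑m + 1) / ↑L * x ^ 2 * (y ^ 2 + t ^ 2) ^ m)
        (-((↑L + 1) / (4 * ((m:ℝ) + 1))) * (↑(m + 1) * (y ^ 2 + z ^ 2) ^ (m + 1 - 1) * (2 * z)) -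
          ((m:ℝ) + 1) / ↑L * x ^ 2 * (↑m * (y ^ 2 + z ^ 2) ^ (m - 1) * (2 * z))) z := by
      exact ((hasDerivAt_qR (m + 1) z (y ^ 2)).const_mul
        (-((↑L + 1) / (4 * ((m:ℝ) + 1))))).sub
        ((hasDerivAt_qR m z (y ^ 2)).const_mul (((m:ℝ) + 1) / ↑L * x ^ 2))
    have h2 : HasDerivAt
        (fun t : ℝ => (↑m + 1) / ↑L * (y ^ 2 + t ^ 2) ^ m * x ^ (L + 2))
        (((m:ℝ) + 1) / ↑L * (↑m * (y ^ 2 + z ^ 2) ^ (m - 1) * (2 * z)) * x ^ (L + 2)) z := by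
      exact ((hasDerivAt_qR m z (y ^ 2)).const_mul (((m:ℝ) + 1) / ↑L)).mul_const (x ^ (L + 2))
    rw [h1.deriv, h2.deriv]
    simp only [Nat.add_sub_cancel, Nat.cast_add, Nat.cast_one]
    field_simp
    ring
end

section
/- For integers k, l with 0 ≤ l ≤ k and on the region y ≠ 0, the vector field Θ^l_k equals g_1 ∇g_2 + ∇g_3, where g_1 = z/y, g_2 = y^2 x^l (y^2+z^2)^{k-l}, and g_3 = -y z x^l (y^2+z^2)^{k-l}. -/
/-- Clebsch representation `Θ^l_k = g₁ ∇g₂ + ∇g₃` on the region `y ≠ 0`, with `g₁ = z/y`,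
`g₂ = y² x^l (y²+z²)^{k-l}` and `g₃ = -y z x^l (y²+z²)^{k-l}`. -/
theorem Theta_clebsch (k l : ℤ) (hl : 0 ≤ l) (hlk : l ≤ k) :
    ∀ x y z : ℝ, y ≠ 0 →
      (T1 l k x y z, T2 l k x y z, T3 l k x y z) =
        (z / y) •
            grad (fun x y z =>
              y ^ 2 * x ^ l.toNat * (y ^ 2 + z ^ 2) ^ (k - l).toNat) x y z +
          grad (fun x y z =>
            -(y * z * x ^ l.toNat * (y ^ 2 + z ^ 2) ^ (k - l).toNat)) x y z := by

  intro x y z hy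
  set m := l.toNat with hm
  set n := (k - l).toNat with hn
  have h1 : deriv (fun t : ℝ => y ^ 2 * t ^ m * (y ^ 2 + z ^ 2) ^ n) x
      = y ^ 2 * ((m : ℝ) * x ^ (m - 1)) * (y ^ 2 + z ^ 2) ^ n :=
    (((hasDerivAt_pow m x).const_mul (y ^ 2)).mul_const _).deriv
  have h2 : deriv (fun t : ℝ => t ^ 2 * x ^ m * (t ^ 2 + z ^ 2) ^ n) y
      = (2 : ℝ) * y ^ 1 * x ^ m * (y ^ 2 + z ^ 2) ^ n
        + y ^ 2 * x ^ m * ((n : ℝ) * (y ^ 2 + z ^ 2) ^ (n - 1) * (2 * y ^ 1)) := by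
    have := (show HasDerivAt (fun t : ℝ => t ^ 2 * x ^ m * (t ^ 2 + z ^ 2) ^ n) _ y from (((hasDerivAt_pow 2 y).mul_const (x ^ m)).mul
      (((hasDerivAt_pow 2 y).add_const (z ^ 2)).pow n))).deriv
    simpa [mul_comm, mul_left_comm, mul_assoc] using this
  have h3 : deriv (fun t : ℝ => y ^ 2 * x ^ m * (y ^ 2 + t ^ 2) ^ n) z
      = y ^ 2 * x ^ m * ((n : ℝ) * (y ^ 2 + z ^ 2) ^ (n - 1) * (2 * z ^ 1)) := by
    have := ((((hasDerivAt_pow 2 z).const_add (y ^ 2)).pow n).const_mul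
      (y ^ 2 * x ^ m)).deriv
    simpa [mul_comm, mul_left_comm, mul_assoc] using this
  have g1 : deriv (fun t : ℝ => -(y * z * t ^ m * (y ^ 2 + z ^ 2) ^ n)) x
      = -(y * z * ((m : ℝ) * x ^ (m - 1)) * (y ^ 2 + z ^ 2) ^ n) :=
    ((((hasDerivAt_pow m x).const_mul (y * z)).mul_const _).neg).deriv
  have g2 : deriv (fun t : ℝ => -(t * z * x ^ m * (t ^ 2 + z ^ 2) ^ n)) y
      = -((z * x ^ m) * (y ^ 2 + z ^ 2) ^ n
        + y * (z * x ^ m) * ((n : ℝ) * (y ^ 2 + z ^ 2) ^ (n - 1) * (2 * y ^ 1))) := by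
    have := (show HasDerivAt (fun t : ℝ => -(id t * (z * x ^ m) * (t ^ 2 + z ^ 2) ^ n)) _ y from ((((hasDerivAt_id y).mul_const (z * x ^ m)).mul
      (((hasDerivAt_pow 2 y).add_const (z ^ 2)).pow n)).neg)).deriv
    have e : (fun t : ℝ => -(t * (z * x ^ m) * (t ^ 2 + z ^ 2) ^ n))
        = fun t : ℝ => -(t * z * x ^ m * (t ^ 2 + z ^ 2) ^ n) := by
      funext t; ring
    simp only [id_eq, Pi.pow_apply] at this
    rw [e] at this
    rw [this]; push_cast; ring
  have g3 : deriv (fun t : ℝ => -(y * t * x ^ m * (y ^ 2 + t ^ 2) ^ n)) z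
      = -((y * x ^ m) * (y ^ 2 + z ^ 2) ^ n
        + z * (y * x ^ m) * ((n : ℝ) * (y ^ 2 + z ^ 2) ^ (n - 1) * (2 * z ^ 1))) := by
    have := (show HasDerivAt (fun t : ℝ => -(id t * (y * x ^ m) * (y ^ 2 + t ^ 2) ^ n)) _ z from ((((hasDerivAt_id z).mul_const (y * x ^ m)).mul
      (((hasDerivAt_pow 2 z).const_add (y ^ 2)).pow n)).neg)).deriv
    have e : (fun t : ℝ => -(t * (y * x ^ m) * (y ^ 2 + t ^ 2) ^ n))
        = fun t : ℝ => -(y * t * x ^ m * (y ^ 2 + t ^ 2) ^ n) := by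
      funext t; ring
    simp only [id_eq, Pi.pow_apply] at this
    rw [e] at this
    rw [this]; push_cast; ring
  simp only [grad, px, py, pz, T1, T2, T3, Prod.smul_mk, Prod.mk_add_mk, smul_eq_mul,
    Prod.mk.injEq, ← hm, ← hn]
  rw [h1, h2, h3, g1, g2, g3]
  refine ⟨by field_simp; ring, by field_simp; ring, by field_simp; ring⟩
end

section
/- Let v_j = Σ_{i=-1}^{⌊j/2⌋} a_i F^i_j + Σ_{i=0}^{⌊j/2⌋} b_i Θ^i_j (a finite real linear combination of the fields F^i_j and Θ^i_j of grade j ≥ 1). If the curl of v_j vanishes identically, then v_j = 0. In other words, no nonzero graded homogeneous element of grade j ≥ 1 of the Lie algebra spanned by the F- and Θ-terms is irrotational. -/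
/-- The components of the graded homogeneous element
`v_j = Σ_{i=-1}^{⌊j/2⌋} aᵢ F^i_j + Σ_{i=0}^{⌊j/2⌋} bᵢ Θ^i_j`. -/
noncomputable def v1 (j : ℤ) (a b : ℤ → ℝ) (x y z : ℝ) : ℝ :=
  (∑ i ∈ Finset.Icc (-1 : ℤ) (j / 2), a i * F1 i j x y z) +
    ∑ i ∈ Finset.Icc (0 : ℤ) (j / 2), b i * T1 i j x y z
noncomputable def v2 (j : ℤ) (a b : ℤ → ℝ) (x y z : ℝ) : ℝ :=
  (∑ i ∈ Finset.Icc (-1 : ℤ) (j / 2), a i * F2 i j x y z) +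
    ∑ i ∈ Finset.Icc (0 : ℤ) (j / 2), b i * T2 i j x y z
noncomputable def v3 (j : ℤ) (a b : ℤ → ℝ) (x y z : ℝ) : ℝ :=
  (∑ i ∈ Finset.Icc (-1 : ℤ) (j / 2), a i * F3 i j x y z) +
    ∑ i ∈ Finset.Icc (0 : ℤ) (j / 2), b i * T3 i j x y z

open Polynomial in
lemma sum_pow_coeff_zero {s : Finset ℤ} (c : ℤ → ℝ) (n : ℤ → ℕ)
    (h : ∀ x : ℝ, ∑ i ∈ s, c i * x ^ n i = 0) (k : ℕ) :
    ∑ i ∈ s, (if n i = k then c i else 0) = 0 := by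
  have hp : (∑ i ∈ s, C (c i) * X ^ n i : ℝ[X]) = 0 := by
    apply Polynomial.funext
    intro x
    simpa [Polynomial.eval_finset_sum] using h x
  have h2 := congrArg (fun p : ℝ[X] => p.coeff k) hp
  simp only [Polynomial.finset_sum_coeff, Polynomial.coeff_C_mul, Polynomial.coeff_X_pow,
    Polynomial.coeff_zero] at h2
  have h3 : (∑ i ∈ s, (if n i = k then c i else 0))
      = ∑ x ∈ s, c x * if k = n x then 1 else 0 := by
    refine Finset.sum_congr rfl fun i _ => ?_
    rcases eq_or_ne (n i) k with hni | hni
    · simp [hni]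
    · simp [hni, Ne.symm hni]
  rw [h3]; exact h2

/-- No nonzero graded homogeneous element of grade `j ≥ 1` of the Lie algebra spanned by the
`F`- and `Θ`-terms is irrotational: if the curl of `v_j` vanishes identically, then `v_j = 0`. -/
theorem not_potential (j : ℤ) (hj : 1 ≤ j) (a b : ℤ → ℝ)
    (hcurl : ∀ x y z : ℝ,
      curl (v1 j a b) (v2 j a b) (v3 j a b) x y z = 0) :
    ∀ x y z : ℝ, (v1 j a b x y z, v2 j a b x y z, v3 j a b x y z) = (0, 0, 0) := by
  -- Step 1: all the b-coefficients vanish (from the 1st curl component at (x,1,0)).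
  have hb : ∀ i ∈ Finset.Icc (0:ℤ) (j/2), b i = 0 := by
    have key1 : ∀ x : ℝ, ∑ i ∈ Finset.Icc (0:ℤ) (j/2),
        (b i * (-(2*((j-i).toNat:ℝ)+2))) * x ^ i.toNat = 0 := by
      intro x
      have h3 : HasDerivAt (fun t => v3 j a b x t 0)
          ((∑ _i ∈ Finset.Icc (-1 : ℤ) (j / 2), (0:ℝ)) +
            ∑ i ∈ Finset.Icc (0 : ℤ) (j / 2),
              (-(b i * (2*((j-i).toNat:ℝ)+1) * x ^ i.toNat))) 1 := by
        unfold v3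
        refine HasDerivAt.add (HasDerivAt.fun_sum fun i _ => ?_) (HasDerivAt.fun_sum fun i _ => ?_)
        · have heq : (fun t : ℝ => a i * F3 i j x t 0) = fun _ => (0:ℝ) := by
            funext t; simp [F3]
          rw [heq]; exact hasDerivAt_const 1 0
        · have heq : (fun t : ℝ => b i * T3 i j x t 0)
              = fun t => (-(b i * x ^ i.toNat)) * t ^ (2*(j-i).toNat+1) := by
            funext t; simp only [T3]; ring
          rw [heq]
          have h := (hasDerivAt_pow (2*(j-i).toNat+1) (1:ℝ)).const_mul (-(b i * x ^ i.toNat))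
          convert h using 1
          on_goal 1 => rfl
          push_cast
          ring
      have h2 : HasDerivAt (fun t => v2 j a b x 1 t)
          ((∑ _i ∈ Finset.Icc (-1 : ℤ) (j / 2), (0:ℝ)) +
            ∑ i ∈ Finset.Icc (0 : ℤ) (j / 2), b i * x ^ i.toNat) 0 := by
        unfold v2
        refine HasDerivAt.add (HasDerivAt.fun_sum fun i _ => ?_) (HasDerivAt.fun_sum fun i _ => ?_)
        · have heq : (fun t : ℝ => a i * F2 i j x 1 t)
              = fun t => (a i * (-(((i:ℝ)+1)/2) * x ^ i.toNat)) * (1 + t^2)^((j-i).toNat) := by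
            funext t; simp only [F2]; ring
          rw [heq]
          have h := (((hasDerivAt_pow 2 (0:ℝ)).const_add 1).pow ((j-i).toNat)).const_mul
            (a i * (-(((i:ℝ)+1)/2) * x ^ i.toNat))
          convert h using 1
          on_goal 1 => rfl
          · funext t; simp only [Pi.pow_apply, Pi.mul_apply, id]
          · simp
        · have heq : (fun t : ℝ => b i * T2 i j x 1 t)
              = fun t => (b i * x ^ i.toNat) * ((1 + t^2)^((j-i).toNat) * t) := by
            funext t; simp only [T2]; ring
          rw [heq]
          have h := ((((hasDerivAt_pow 2 (0:ℝ)).const_add 1).pow ((j-i).toNat)).mul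
            (hasDerivAt_id 0)).const_mul (b i * x ^ i.toNat)
          convert h using 1
          on_goal 1 => rfl
          · funext t; simp only [Pi.pow_apply, Pi.mul_apply, id]
          · simp
      have e3 : py (v3 j a b) x 1 0 = _ := h3.deriv
      have e2 : pz (v2 j a b) x 1 0 = _ := h2.deriv
      have hc : py (v3 j a b) x 1 0 - pz (v2 j a b) x 1 0 = 0 :=
        congrArg Prod.fst (hcurl x 1 0)
      rw [e3, e2, Finset.sum_const_zero, zero_add, zero_add,
        ← Finset.sum_sub_distrib] at hc
      rw [← hc]
      exact Finset.sum_congr rfl fun i _ => by ring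
    intro i₀ hi₀
    have hk' : (∑ i ∈ Finset.Icc (0:ℤ) (j/2),
        if i.toNat = i₀.toNat then b i * (-(2*((j-i).toNat:ℝ)+2)) else 0) = 0 :=
      sum_pow_coeff_zero (fun i => b i * (-(2*((j-i).toNat:ℝ)+2))) (fun i => i.toNat)
        key1 i₀.toNat
    have hone : (∑ i ∈ Finset.Icc (0:ℤ) (j/2),
        if i.toNat = i₀.toNat then b i * (-(2*((j-i).toNat:ℝ)+2)) else 0)
          = b i₀ * (-(2*((j-i₀).toNat:ℝ)+2)) := by
      rw [Finset.sum_eq_single_of_mem i₀ hi₀ ?_]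
      · rw [if_pos rfl]
      · intro i hi hne
        have h1 := Finset.mem_Icc.mp hi
        have h2 := Finset.mem_Icc.mp hi₀
        rw [if_neg (by intro h; exact hne (by omega))]
    rw [hone] at hk'
    have hm : (0:ℝ) ≤ ((j-i₀).toNat:ℝ) := Nat.cast_nonneg _
    rcases mul_eq_zero.mp hk' with h | h
    · exact h
    · linarith
  -- Step 2: all the a-coefficients vanish (from the 2nd curl component at (x,0,x²)).
  have ha : ∀ i ∈ Finset.Icc (-1:ℤ) (j/2), a i = 0 := by
    have key2 : ∀ x : ℝ, ∑ i ∈ Finset.Icc (-1:ℤ) (j/2),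
        (a i * (((j:ℝ)-(i:ℝ)+1) * (2*((j-i).toNat:ℝ)))
            * x ^ ((i+1).toNat + 2*(2*(j-i).toNat - 1))
          + a i * ((((i:ℝ))+1)/2 * ((i.toNat:ℝ)))
            * x ^ ((i.toNat - 1) + 2*(2*(j-i).toNat + 1))) = 0 := by
      intro x
      have h1 : HasDerivAt (fun t => v1 j a b x 0 t)
          ((∑ i ∈ Finset.Icc (-1:ℤ) (j/2),
            a i * (((j:ℝ)-(i:ℝ)+1) * (2*((j-i).toNat:ℝ)))
              * x ^ ((i+1).toNat + 2*(2*(j-i).toNat - 1))) +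
            ∑ _i ∈ Finset.Icc (0:ℤ) (j/2), (0:ℝ)) (x^2) := by
        unfold v1
        refine HasDerivAt.add (HasDerivAt.fun_sum fun i _ => ?_) (HasDerivAt.fun_sum fun i _ => ?_)
        · have heq : (fun t : ℝ => a i * F1 i j x 0 t)
              = fun t => (a i * (((j:ℝ)-(i:ℝ)+1) * x ^ (i+1).toNat)) * t ^ (2*(j-i).toNat) := by
            funext t; simp only [F1]; ring
          rw [heq]
          have h := (hasDerivAt_pow (2*(j-i).toNat) (x^2)).const_mul
            (a i * (((j:ℝ)-(i:ℝ)+1) * x ^ (i+1).toNat))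
          convert h using 1
          on_goal 1 => rfl
          rw [pow_add, pow_mul]
          push_cast
          ring
        · have heq : (fun t : ℝ => b i * T1 i j x 0 t) = fun _ => (0:ℝ) := by
            funext t; simp [T1]
          rw [heq]; exact hasDerivAt_const (x^2) 0
      have h3 : HasDerivAt (fun t => v3 j a b t 0 (x^2))
          ((∑ i ∈ Finset.Icc (-1:ℤ) (j/2),
            -(a i * ((((i:ℝ))+1)/2 * ((i.toNat:ℝ)))
              * x ^ ((i.toNat - 1) + 2*(2*(j-i).toNat + 1)))) +
            ∑ _i ∈ Finset.Icc (0:ℤ) (j/2), (0:ℝ)) x := by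
        unfold v3
        refine HasDerivAt.add (HasDerivAt.fun_sum fun i _ => ?_) (HasDerivAt.fun_sum fun i _ => ?_)
        · have heq : (fun t : ℝ => a i * F3 i j t 0 (x^2))
              = fun t => (a i * (-(((i:ℝ)+1)/2) * (x^2) ^ (2*(j-i).toNat+1))) * t ^ i.toNat := by
            funext t; simp only [F3]; ring
          rw [heq]
          have h := (hasDerivAt_pow (i.toNat) x).const_mul
            (a i * (-(((i:ℝ)+1)/2) * (x^2) ^ (2*(j-i).toNat+1)))
          convert h using 1
          on_goal 1 => rfl
          rw [pow_add, pow_mul]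
          ring
        · have heq : (fun t : ℝ => b i * T3 i j t 0 (x^2)) = fun _ => (0:ℝ) := by
            funext t; simp [T3]
          rw [heq]; exact hasDerivAt_const x 0
      have e1 : pz (v1 j a b) x 0 (x^2) = _ := h1.deriv
      have e3 : px (v3 j a b) x 0 (x^2) = _ := h3.deriv
      have hc : pz (v1 j a b) x 0 (x^2) - px (v3 j a b) x 0 (x^2) = 0 :=
        congrArg (fun p : ℝ × ℝ × ℝ => p.2.1) (hcurl x 0 (x^2))
      rw [e1, e3, Finset.sum_const_zero, add_zero, add_zero,
        ← Finset.sum_sub_distrib] at hc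
      rw [← hc]
      exact Finset.sum_congr rfl fun i _ => by ring
    have hdisj : Disjoint (Finset.Icc (-1:ℤ) (j/2))
        (Finset.Icc (-1 + (j/2+2)) (j/2 + (j/2+2))) := by
      rw [Finset.disjoint_left]
      intro i hi hi'
      have h1 := Finset.mem_Icc.mp hi
      have h2 := Finset.mem_Icc.mp hi'
      omega
    have hsum : ∀ x : ℝ, ∑ i ∈ Finset.Icc (-1:ℤ) (j/2) ∪
        Finset.Icc (-1 + (j/2+2)) (j/2 + (j/2+2)),
        (if i ≤ j/2 then a i * (((j:ℝ)-(i:ℝ)+1) * (2*((j-i).toNat:ℝ)))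
          else a (i - (j/2+2)) * ((((i - (j/2+2) : ℤ):ℝ)+1)/2 * (((i - (j/2+2)).toNat:ℝ))))
        * x ^ (if i ≤ j/2 then (i+1).toNat + 2*(2*(j-i).toNat - 1)
          else ((i - (j/2+2)).toNat - 1) + 2*(2*(j-(i - (j/2+2))).toNat + 1)) = 0 := by
      intro x
      rw [Finset.sum_union hdisj]
      have hA : ∑ i ∈ Finset.Icc (-1:ℤ) (j/2),
          (if i ≤ j/2 then a i * (((j:ℝ)-(i:ℝ)+1) * (2*((j-i).toNat:ℝ)))
            else a (i - (j/2+2)) * ((((i - (j/2+2) : ℤ):ℝ)+1)/2 * (((i - (j/2+2)).toNat:ℝ))))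
          * x ^ (if i ≤ j/2 then (i+1).toNat + 2*(2*(j-i).toNat - 1)
            else ((i - (j/2+2)).toNat - 1) + 2*(2*(j-(i - (j/2+2))).toNat + 1))
          = ∑ i ∈ Finset.Icc (-1:ℤ) (j/2),
            a i * (((j:ℝ)-(i:ℝ)+1) * (2*((j-i).toNat:ℝ)))
              * x ^ ((i+1).toNat + 2*(2*(j-i).toNat - 1)) := by
        refine Finset.sum_congr rfl fun i hi => ?_
        have h1 := Finset.mem_Icc.mp hi
        rw [if_pos h1.2, if_pos h1.2]
      have hB : ∑ i ∈ Finset.Icc (-1 + (j/2+2)) (j/2 + (j/2+2)),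
          (if i ≤ j/2 then a i * (((j:ℝ)-(i:ℝ)+1) * (2*((j-i).toNat:ℝ)))
            else a (i - (j/2+2)) * ((((i - (j/2+2) : ℤ):ℝ)+1)/2 * (((i - (j/2+2)).toNat:ℝ))))
          * x ^ (if i ≤ j/2 then (i+1).toNat + 2*(2*(j-i).toNat - 1)
            else ((i - (j/2+2)).toNat - 1) + 2*(2*(j-(i - (j/2+2))).toNat + 1))
          = ∑ i ∈ Finset.Icc (-1:ℤ) (j/2),
            a i * ((((i:ℝ))+1)/2 * ((i.toNat:ℝ)))
              * x ^ ((i.toNat - 1) + 2*(2*(j-i).toNat + 1)) := by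
        rw [← Finset.map_add_right_Icc, Finset.sum_map]
        refine Finset.sum_congr rfl fun i hi => ?_
        have h1 := Finset.mem_Icc.mp hi
        simp only [addRightEmbedding_apply]
        rw [if_neg (by omega), if_neg (by omega), add_sub_cancel_right]
      rw [hA, hB, ← Finset.sum_add_distrib]
      exact key2 x
    intro i₀ hi₀
    have hb2 := Finset.mem_Icc.mp hi₀
    have hk' : (∑ i ∈ Finset.Icc (-1:ℤ) (j/2) ∪
        Finset.Icc (-1 + (j/2+2)) (j/2 + (j/2+2)),
        if (if i ≤ j/2 then (i+1).toNat + 2*(2*(j-i).toNat - 1)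
            else ((i - (j/2+2)).toNat - 1) + 2*(2*(j-(i - (j/2+2))).toNat + 1))
          = (i₀+1).toNat + 2*(2*(j-i₀).toNat - 1)
        then (if i ≤ j/2 then a i * (((j:ℝ)-(i:ℝ)+1) * (2*((j-i).toNat:ℝ)))
          else a (i - (j/2+2)) * ((((i - (j/2+2) : ℤ):ℝ)+1)/2 * (((i - (j/2+2)).toNat:ℝ))))
        else 0) = 0 :=
      sum_pow_coeff_zero _ _ hsum ((i₀+1).toNat + 2*(2*(j-i₀).toNat - 1))
    have hone : (∑ i ∈ Finset.Icc (-1:ℤ) (j/2) ∪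
        Finset.Icc (-1 + (j/2+2)) (j/2 + (j/2+2)),
        if (if i ≤ j/2 then (i+1).toNat + 2*(2*(j-i).toNat - 1)
            else ((i - (j/2+2)).toNat - 1) + 2*(2*(j-(i - (j/2+2))).toNat + 1))
          = (i₀+1).toNat + 2*(2*(j-i₀).toNat - 1)
        then (if i ≤ j/2 then a i * (((j:ℝ)-(i:ℝ)+1) * (2*((j-i).toNat:ℝ)))
          else a (i - (j/2+2)) * ((((i - (j/2+2) : ℤ):ℝ)+1)/2 * (((i - (j/2+2)).toNat:ℝ))))
        else 0)
        = a i₀ * (((j:ℝ)-(i₀:ℝ)+1) * (2*((j-i₀).toNat:ℝ))) := by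
      rw [Finset.sum_eq_single_of_mem i₀ (Finset.mem_union_left _ hi₀) ?_]
      · simp [hb2.2]
      · intro i hi hne
        rcases Finset.mem_union.mp hi with hiu | hiu
        · have h1 := Finset.mem_Icc.mp hiu
          have hcond : ¬ ((if i ≤ j/2 then (i+1).toNat + 2*(2*(j-i).toNat - 1)
              else ((i - (j/2+2)).toNat - 1) + 2*(2*(j-(i - (j/2+2))).toNat + 1))
                = (i₀+1).toNat + 2*(2*(j-i₀).toNat - 1)) := by
            rw [if_pos h1.2]
            intro h
            exact hne (by omega)
          rw [if_neg hcond]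
        · have h1 := Finset.mem_Icc.mp hiu
          have hle : ¬ i ≤ j/2 := by omega
          by_cases hE : (if i ≤ j/2 then (i+1).toNat + 2*(2*(j-i).toNat - 1)
              else ((i - (j/2+2)).toNat - 1) + 2*(2*(j-(i - (j/2+2))).toNat + 1))
                = (i₀+1).toNat + 2*(2*(j-i₀).toNat - 1)
          · rw [if_pos hE, if_neg hle]
            rw [if_neg hle] at hE
            have h0 : i - (j/2+2) ≤ 0 := by omega
            rw [Int.toNat_of_nonpos h0]
            simp
          · rw [if_neg hE]
    rw [hone] at hk'
    have hi0j : (i₀:ℝ) < (j:ℝ) + 1 := by exact_mod_cast (by omega : i₀ < j + 1)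
    have hm1 : (1:ℝ) ≤ ((j-i₀).toNat:ℝ) := by exact_mod_cast (by omega : 1 ≤ (j-i₀).toNat)
    rcases mul_eq_zero.mp hk' with h | h
    · exact h
    · exact absurd h (ne_of_gt (mul_pos (by linarith) (by linarith)))
  -- Step 3: conclude.
  intro x y z
  simp only [Prod.mk.injEq]
  refine ⟨?_, ?_, ?_⟩
  · unfold v1
    rw [Finset.sum_eq_zero fun i hi => by rw [ha i hi, zero_mul],
      Finset.sum_eq_zero fun i hi => by rw [hb i hi, zero_mul], add_zero]
  · unfold v2
    rw [Finset.sum_eq_zero fun i hi => by rw [ha i hi, zero_mul],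
      Finset.sum_eq_zero fun i hi => by rw [hb i hi, zero_mul], add_zero]
  · unfold v3
    rw [Finset.sum_eq_zero fun i hi => by rw [ha i hi, zero_mul],
      Finset.sum_eq_zero fun i hi => by rw [hb i hi, zero_mul], add_zero]
end
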